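/- arXiv:1307.3928 — 2 statements merged into one kernel-verified Lean document; each statement's English description precedes it below -/
import Mathlib

section
/- There is a one-to-one correspondence between totally assigned subgraphs (γ',ν') of the cograph (Γ/γ, μ/ν) and totally assigned subgraphs (γ₁,ν₁) of (Γ,μ) containing (γ,ν), given by restricting ν₁ to edges of γ₁ not internal to γ, with inverse given by adjoining the edges of γ and extending the order compatibly with μ. -/
open scoped Classical TensorProduct

/-- A concrete representative of a totally assigned graph (TAG): a graph with totally
ordered edge set (edges carry the standard labelling `Fin ne`), whose vertices are
natural numbers (the vertex set being the set of endpoints of edges, so that there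
are no isolated vertices). -/
structure PreTAG where
  ne : ℕ
  ends : Fin ne → Sym2 ℕ

/-- Isomorphism of TAG representatives: a bijection of vertices matching up the
edges *preserving the total edge order*. -/
def TagRel (a b : PreTAG) : Prop :=
  ∃ (hm : a.ne = b.ne) (e : ℕ ≃ ℕ),
    ∀ i : Fin a.ne, Sym2.map e (a.ends i) = b.ends (Fin.cast hm i)

theorem tagRel_refl (a : PreTAG) : TagRel a a :=
  ⟨rfl, Equiv.refl ℕ, fun i => by simp⟩

theorem tagRel_symm : ∀ {a b : PreTAG}, TagRel a b → TagRel b a := by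
  rintro a b ⟨hm, e, h⟩
  refine ⟨hm.symm, e.symm, fun j => ?_⟩
  have h2 := h (Fin.cast hm.symm j)
  have h3 : Fin.cast hm (Fin.cast hm.symm j) = j := by ext; simp
  rw [h3] at h2
  rw [← h2, Sym2.map_map]
  simp [Equiv.symm_comp_self]

theorem tagRel_trans : ∀ {a b c : PreTAG}, TagRel a b → TagRel b c → TagRel a c := by
  rintro a b c ⟨hm, e, h⟩ ⟨hm', e', h'⟩
  refine ⟨hm.trans hm', e.trans e', fun i => ?_⟩
  have h2 := h' (Fin.cast hm i)
  have h3 : Fin.cast hm' (Fin.cast hm i) = Fin.cast (hm.trans hm') i := by ext; simp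
  rw [h3] at h2
  rw [← h2, ← h i, Sym2.map_map]
  rfl

instance tagSetoid : Setoid PreTAG :=
  ⟨TagRel, ⟨tagRel_refl, tagRel_symm, tagRel_trans⟩⟩

/-- Totally assigned graphs: isomorphism classes of representatives. -/
def TAGQ := Quotient tagSetoid

/-- The empty TAG, unit of the product. -/
def emptyPre : PreTAG := ⟨0, fun i => i.elim0⟩

/-- Disjoint union of two TAG representatives, with the ordinal sum order on edges
(all edges of `a` come before all edges of `b`); vertices are kept disjoint by
relabelling through `2*·` and `2*·+1`. -/
def mulPre (a b : PreTAG) : PreTAG where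
  ne := a.ne + b.ne
  ends := fun i =>
    match finSumFinEquiv.symm i with
    | Sum.inl j => (a.ends j).map (fun v => 2 * v)
    | Sum.inr j => (b.ends j).map (fun v => 2 * v + 1)

/-- Product of TAGs: disjoint union with the ordinal sum order. -/
noncomputable def mulQ (x y : TAGQ) : TAGQ := ⟦mulPre x.out y.out⟧

/-- The totally assigned subgraph of `a` determined by a subset `S` of its edges:
its edges are those in `S` with the order (and endpoints) induced from `a`. -/
noncomputable def subPre (a : PreTAG) (S : Finset (Fin a.ne)) : PreTAG where
  ne := S.card
  ends := fun j => a.ends (S.orderIsoOfFin rfl j)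

/-- Two vertices are directly linked in the subgraph with edge set `S`. -/
def conRel (a : PreTAG) (S : Finset (Fin a.ne)) : ℕ → ℕ → Prop :=
  fun u v => ∃ i ∈ S, u ∈ a.ends i ∧ v ∈ a.ends i

/-- The contraction (shrinking) `a / S`: each connected component of the subgraph with
edge set `S` is shrunk to a single vertex (the least vertex of the component); the
remaining edges are those not in `S`, with the order induced from `a`. -/
noncomputable def conPre (a : PreTAG) (S : Finset (Fin a.ne)) : PreTAG where
  ne := Sᶜ.card
  ends := fun j =>
    (a.ends (Sᶜ.orderIsoOfFin rfl j)).map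
      (fun v => sInf {u | Relation.EqvGen (conRel a S) u v})

/-- The free vector space spanned by TAGs. -/
abbrev HT (K : Type) [Field K] : Type := TAGQ →₀ K

/-- The unit: the empty TAG. -/
noncomputable def oneH (K : Type) [Field K] : HT K := Finsupp.single ⟦emptyPre⟧ 1

/-- The product of `HT K`, bilinear extension of the product of TAGs. -/
noncomputable def mulLin (K : Type) [Field K] : HT K →ₗ[K] HT K →ₗ[K] HT K :=
  Finsupp.lsum K fun a => LinearMap.smulRight LinearMap.id
    (Finsupp.lsum K fun b => LinearMap.smulRight LinearMap.id
      (Finsupp.single (mulQ a b) 1))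

/-- The product as a map `HT K ⊗ HT K → HT K`. -/
noncomputable def mulMap (K : Type) [Field K] : HT K ⊗[K] HT K →ₗ[K] HT K :=
  TensorProduct.lift (mulLin K)

/-- Coproduct of a single TAG: the sum over all totally assigned subgraphs
(equivalently, over all subsets of the edge set) of subgraph ⊗ contracted graph. -/
noncomputable def deltaT (K : Type) [Field K] (g : TAGQ) : HT K ⊗[K] HT K :=
  ∑ S : Finset (Fin g.out.ne),
    Finsupp.single (⟦subPre g.out S⟧ : TAGQ) (1 : K) ⊗ₜ
      Finsupp.single (⟦conPre g.out S⟧ : TAGQ) (1 : K)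

/-- The coproduct of `HT K`. -/
noncomputable def deltaH (K : Type) [Field K] : HT K →ₗ[K] HT K ⊗[K] HT K :=
  Finsupp.lsum K fun g => LinearMap.smulRight LinearMap.id (deltaT K g)

/-- The counit: coefficient of the empty TAG. -/
noncomputable def epsH (K : Type) [Field K] : HT K →ₗ[K] K :=
  Finsupp.lapply ⟦emptyPre⟧


/-- There is a one-to-one correspondence between totally assigned subgraphs of the
cograph `(Γ/γ, μ/ν)` and totally assigned subgraphs of `(Γ,μ)` containing `(γ,ν)`:
the map sending an edge subset `T ⊇ S` of `Γ = a` to the corresponding set of edges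
of `Γ/γ` (those edges of `T` not internal to `γ`, i.e. not in `S`) is a bijection. -/
theorem subgraphs_of_cograph_correspondence (a : PreTAG) (S : Finset (Fin a.ne)) :
    Function.Bijective (fun T : {T : Finset (Fin a.ne) // S ⊆ T} =>
      (Finset.univ.filter fun j : Fin (conPre a S).ne =>
        ((Sᶜ.orderIsoOfFin rfl j : Fin a.ne) ∈ T.1))) := by
  constructor
  · rintro ⟨T₁, h₁⟩ ⟨T₂, h₂⟩ h
    simp only [Finset.ext_iff, Finset.mem_filter, Finset.mem_univ, true_and] at h
    ext i
    by_cases hi : i ∈ S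
    · simp [h₁ hi, h₂ hi]
    · have hic : i ∈ Sᶜ := Finset.mem_compl.mpr hi
      have := h ((Sᶜ.orderIsoOfFin rfl).symm ⟨i, hic⟩)
      simpa using this
  · intro U
    refine ⟨⟨S ∪ U.image (fun j => (Sᶜ.orderIsoOfFin rfl j : Fin a.ne)),
      Finset.subset_union_left⟩, ?_⟩
    ext j
    simp only [Finset.mem_filter, Finset.mem_univ, true_and, Finset.mem_union,
      Finset.mem_image]
    constructor
    · rintro (hS | hkm)
      · exact absurd hS (by have := (Sᶜ.orderIsoOfFin rfl j).2; simp only [Finset.mem_compl] at this; exact this)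
      · obtain ⟨k, hk, hkj⟩ := Finset.mem_image.mp hkm
        have : k = j := by
          have : (Sᶜ.orderIsoOfFin rfl k) = (Sᶜ.orderIsoOfFin rfl j) :=
            Subtype.ext hkj
          exact (Sᶜ.orderIsoOfFin rfl).injective this
        exact this ▸ hk
    · intro hj
      exact Or.inr (Finset.mem_image.mpr ⟨j, hj, rfl⟩)
end

section
/- The coproduct Δ on the space H of TAGs, defined by Δ(Γ,μ) = Σ over totally assigned subgraphs (γ,ν) ⊆ (Γ,μ) of (γ,ν) ⊗ (Γ/γ, μ/ν), is coassociative: (Δ⊗Id)∘Δ = (Id⊗Δ)∘Δ. -/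
open scoped Classical TensorProduct

section Aux
open Finset

variable {n : ℕ}

/-- The order embedding enumerating a finset of `Fin n`. -/
noncomputable def emb (S : Finset (Fin n)) : Fin S.card → Fin n :=
  S.orderEmbOfFin rfl

lemma emb_mem (S : Finset (Fin n)) (j : Fin S.card) : emb S j ∈ S :=
  Finset.orderEmbOfFin_mem _ _ _

lemma emb_strictMono (S : Finset (Fin n)) : StrictMono (emb S) :=
  (S.orderEmbOfFin rfl).strictMono

lemma emb_inj (S : Finset (Fin n)) : Function.Injective (emb S) :=
  (emb_strictMono S).injective

lemma emb_surjOn (S : Finset (Fin n)) {x : Fin n} (hx : x ∈ S) :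
    ∃ j, emb S j = x := by
  have h := Finset.range_orderEmbOfFin S (rfl : S.card = S.card)
  have : x ∈ Set.range (S.orderEmbOfFin rfl) := by rw [h]; exact hx
  exact this

lemma subPre_ends (a : PreTAG) (S : Finset (Fin a.ne)) (j : Fin S.card) :
    (subPre a S).ends j = a.ends (emb S j) := by
  simp only [subPre, emb, ← Finset.coe_orderIsoOfFin_apply]

/-- generic cast for orderEmbOfFin -/
lemma orderEmbOfFin_cast {α : Type*} [LinearOrder α] {s : Finset α} {k l : ℕ}
    (h : s.card = k) (h' : s.card = l) (hkl : k = l) (j : Fin k) :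
    s.orderEmbOfFin h j = s.orderEmbOfFin h' (Fin.cast hkl j) := by
  subst hkl
  rfl

lemma emb_emb (S : Finset (Fin n)) (U : Finset (Fin S.card)) {C : Finset (Fin n)}
    (hC : U.image (emb S) = C) (hcard : U.card = C.card) (j : Fin U.card) :
    emb S (emb U j) = emb C (Fin.cast hcard j) := by
  have h1 : (fun j : Fin U.card => emb S (emb U j)) = C.orderEmbOfFin hcard.symm := by
    apply Finset.orderEmbOfFin_unique
    · intro x
      rw [← hC]
      exact Finset.mem_image_of_mem _ (emb_mem U x)
    · exact (emb_strictMono S).comp (emb_strictMono U)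
  calc emb S (emb U j) = C.orderEmbOfFin hcard.symm j := congrFun h1 j
    _ = emb C (Fin.cast hcard j) := orderEmbOfFin_cast _ _ _ _

lemma card_image_emb (S : Finset (Fin n)) (U : Finset (Fin S.card)) :
    (U.image (emb S)).card = U.card :=
  Finset.card_image_of_injective _ (emb_inj S)

lemma image_filter_emb (S C : Finset (Fin n)) :
    (univ.filter (fun j => emb S j ∈ C)).image (emb S) = S ∩ C := by
  ext x
  simp only [Finset.mem_image, Finset.mem_filter, Finset.mem_univ, true_and, Finset.mem_inter]
  constructor
  · rintro ⟨j, hj, rfl⟩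
    exact ⟨emb_mem S j, hj⟩
  · rintro ⟨hxS, hxC⟩
    obtain ⟨j, rfl⟩ := emb_surjOn S hxS
    exact ⟨j, hxC, rfl⟩

lemma filter_emb_compl (S C : Finset (Fin n)) :
    (univ.filter (fun j => emb S j ∈ C))ᶜ = univ.filter (fun j => emb S j ∈ Cᶜ) := by
  ext j
  simp

end Aux
section Aux2
open Finset Relation

/-- Minimum of the connectivity class. -/
noncomputable def cmin (a : PreTAG) (S : Finset (Fin a.ne)) : ℕ → ℕ :=
  fun v => sInf {u | Relation.EqvGen (conRel a S) u v}

lemma conPre_ends (a : PreTAG) (S : Finset (Fin a.ne)) (j : Fin Sᶜ.card) :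
    (conPre a S).ends j = Sym2.map (cmin a S) (a.ends (emb Sᶜ j)) := by
  simp only [conPre, cmin, emb, ← Finset.coe_orderIsoOfFin_apply]
  rfl

lemma cmin_spec (a : PreTAG) (S : Finset (Fin a.ne)) (v : ℕ) :
    Relation.EqvGen (conRel a S) (cmin a S v) v := by
  have : cmin a S v ∈ {u | Relation.EqvGen (conRel a S) u v} :=
    Nat.sInf_mem ⟨v, Relation.EqvGen.refl v⟩
  exact this

lemma cmin_le (a : PreTAG) (S : Finset (Fin a.ne)) {u v : ℕ}
    (h : Relation.EqvGen (conRel a S) u v) : cmin a S v ≤ u :=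
  Nat.sInf_le h

lemma cmin_eq_of (a : PreTAG) (S : Finset (Fin a.ne)) {u v : ℕ}
    (h : Relation.EqvGen (conRel a S) u v) : cmin a S u = cmin a S v := by
  unfold cmin
  congr 1
  ext w
  exact ⟨fun hw => hw.trans _ _ _ h, fun hw => hw.trans _ _ _ h.symm⟩

lemma cmin_idem (a : PreTAG) (S : Finset (Fin a.ne)) (v : ℕ) :
    cmin a S (cmin a S v) = cmin a S v :=
  cmin_eq_of a S (cmin_spec a S v)

lemma cmin_eq_iff (a : PreTAG) (S : Finset (Fin a.ne)) {u v : ℕ} :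
    cmin a S u = cmin a S v ↔ Relation.EqvGen (conRel a S) u v := by
  constructor
  · intro h
    have h1 := cmin_spec a S u
    have h2 := cmin_spec a S v
    rw [h] at h1
    exact (h1.symm _ _).trans _ _ _ h2
  · exact cmin_eq_of a S

lemma conRel_subPre (a : PreTAG) (S : Finset (Fin a.ne)) (T : Finset (Fin S.card)) :
    conRel (subPre a S) T = conRel a (T.image (emb S)) := by
  funext u v
  unfold conRel
  simp only [subPre_ends, eq_iff_iff]
  constructor
  · rintro ⟨i, hi, h1, h2⟩
    exact ⟨emb S i, Finset.mem_image_of_mem _ hi, h1, h2⟩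
  · rintro ⟨k, hk, h1, h2⟩
    obtain ⟨i, hi, rfl⟩ := Finset.mem_image.1 hk
    exact ⟨i, hi, h1, h2⟩

/-- The edge relation of a subgraph of a contracted graph. -/
def relB (a : PreTAG) (A B : Finset (Fin a.ne)) : ℕ → ℕ → Prop :=
  fun u v => ∃ k ∈ B, u ∈ Sym2.map (cmin a A) (a.ends k) ∧ v ∈ Sym2.map (cmin a A) (a.ends k)

lemma conRel_conPre (a : PreTAG) (A : Finset (Fin a.ne)) (T : Finset (Fin Aᶜ.card)) :
    conRel (conPre a A) T = relB a A (T.image (emb Aᶜ)) := by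
  funext u v
  unfold conRel relB
  simp only [conPre_ends, eq_iff_iff]
  constructor
  · rintro ⟨i, hi, h1, h2⟩
    exact ⟨emb Aᶜ i, Finset.mem_image_of_mem _ hi, h1, h2⟩
  · rintro ⟨k, hk, h1, h2⟩
    obtain ⟨i, hi, rfl⟩ := Finset.mem_image.1 hk
    exact ⟨i, hi, h1, h2⟩

lemma conRel_mono (a : PreTAG) {A A' : Finset (Fin a.ne)} (h : A ⊆ A') {u v : ℕ}
    (hr : conRel a A u v) : conRel a A' u v := by
  obtain ⟨i, hi, h1, h2⟩ := hr
  exact ⟨i, h hi, h1, h2⟩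

end Aux2
section Aux3
open Finset Relation

variable (a : PreTAG) (A B : Finset (Fin a.ne))

lemma relB_L1 {u v : ℕ} (h : Relation.EqvGen (conRel a (A ∪ B)) u v) :
    Relation.EqvGen (relB a A B) (cmin a A u) (cmin a A v) := by
  induction h with
  | rel u v huv =>
    obtain ⟨k, hk, hu, hv⟩ := huv
    rcases Finset.mem_union.1 hk with hkA | hkB
    · have : cmin a A u = cmin a A v :=
        cmin_eq_of a A (Relation.EqvGen.rel _ _ ⟨k, hkA, hu, hv⟩)
      rw [this]
      exact Relation.EqvGen.refl _
    · exact Relation.EqvGen.rel _ _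
        ⟨k, hkB, Sym2.mem_map.2 ⟨u, hu, rfl⟩, Sym2.mem_map.2 ⟨v, hv, rfl⟩⟩
  | refl u => exact Relation.EqvGen.refl _
  | symm u v _ ih => exact ih.symm _ _
  | trans u v w _ _ ih1 ih2 => exact ih1.trans _ _ _ ih2

lemma relB_L2 {w w' : ℕ} (h : Relation.EqvGen (relB a A B) w w') :
    w = w' ∨ (cmin a A w = w ∧ cmin a A w' = w' ∧
      ∀ u v, cmin a A u = w → cmin a A v = w' → Relation.EqvGen (conRel a (A ∪ B)) u v) := by
  induction h with
  | rel w w' hww =>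
    obtain ⟨k, hk, hw, hw'⟩ := hww
    obtain ⟨p, hp, hpw⟩ := Sym2.mem_map.1 hw
    obtain ⟨q, hq, hqw⟩ := Sym2.mem_map.1 hw'
    right
    refine ⟨by rw [← hpw, cmin_idem], by rw [← hqw, cmin_idem], fun u v hu hv => ?_⟩
    have h1 : Relation.EqvGen (conRel a A) u p := by
      rw [← cmin_eq_iff a A]; rw [hu, ← hpw]
    have h2 : Relation.EqvGen (conRel a A) q v := by
      rw [← cmin_eq_iff a A]; rw [hv, ← hqw]
    have hm : ∀ {x y : ℕ}, Relation.EqvGen (conRel a A) x y →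
        Relation.EqvGen (conRel a (A ∪ B)) x y :=
      fun hxy => hxy.mono (fun x y hr => conRel_mono a Finset.subset_union_left hr)
    have hpq : Relation.EqvGen (conRel a (A ∪ B)) p q :=
      Relation.EqvGen.rel _ _ ⟨k, Finset.mem_union_right _ hk, hp, hq⟩
    exact ((hm h1).trans _ _ _ hpq).trans _ _ _ (hm h2)
  | refl w => exact Or.inl rfl
  | symm w w' _ ih =>
    rcases ih with h | ⟨h1, h2, h3⟩
    · exact Or.inl h.symm
    · exact Or.inr ⟨h2, h1, fun u v hu hv => (h3 v u hv hu).symm _ _⟩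
  | trans w w' w'' _ _ ih1 ih2 =>
    rcases ih1 with h | ⟨h1, h2, h3⟩
    · rcases ih2 with h' | ⟨h1', h2', h3'⟩
      · exact Or.inl (h.trans h')
      · exact Or.inr (h ▸ ⟨h1', h2', h3'⟩)
    · rcases ih2 with h' | ⟨h1', h2', h3'⟩
      · exact Or.inr (h' ▸ ⟨h1, h2, h3⟩)
      · exact Or.inr ⟨h1, h2', fun u v hu hv =>
          (h3 u w' hu h2).trans _ _ _ (h3' w' v h2 hv)⟩

lemma relB_L3 (v : ℕ) :
    sInf {u | Relation.EqvGen (relB a A B) u (cmin a A v)} = cmin a (A ∪ B) v := by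
  set f₁ := cmin a A with hf₁
  set m := cmin a (A ∪ B) v with hmdef
  set D := {u | Relation.EqvGen (relB a A B) u (f₁ v)} with hD
  have hmono : ∀ {x y : ℕ}, Relation.EqvGen (conRel a A) x y →
      Relation.EqvGen (conRel a (A ∪ B)) x y :=
    fun hxy => hxy.mono (fun x y hr => conRel_mono a Finset.subset_union_left hr)
  have hmC : Relation.EqvGen (conRel a (A ∪ B)) m v := cmin_spec a (A ∪ B) v
  -- f₁ m = m
  have hf₁m : f₁ m = m := by
    have h1 : Relation.EqvGen (conRel a (A ∪ B)) (f₁ m) v :=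
      (hmono (cmin_spec a A m)).trans _ _ _ hmC
    have h2 : m ≤ f₁ m := cmin_le a (A ∪ B) h1
    have h3 : f₁ m ≤ m := cmin_le a A (Relation.EqvGen.refl m)
    omega
  have hmD : m ∈ D := by
    have h := relB_L1 a A B hmC
    show Relation.EqvGen (relB a A B) m (f₁ v)
    rw [← hf₁m]
    exact h
  have hDne : D.Nonempty := ⟨f₁ v, Relation.EqvGen.refl _⟩
  apply le_antisymm
  · exact Nat.sInf_le hmD
  · have hdD : sInf D ∈ D := Nat.sInf_mem hDne
    rcases relB_L2 a A B hdD with h | ⟨h1, _, h3⟩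
    · rw [h]
      exact cmin_le a (A ∪ B) (hmono (cmin_spec a A v))
    · exact cmin_le a (A ∪ B) (h3 (sInf D) v h1 rfl)

end Aux3
section Aux4
open Finset Relation

lemma tagq_eq {a b : PreTAG} (hm : a.ne = b.ne)
    (h : ∀ i : Fin a.ne, a.ends i = b.ends (Fin.cast hm i)) : (⟦a⟧ : TAGQ) = ⟦b⟧ :=
  Quotient.sound ⟨hm, Equiv.refl ℕ, fun i => by
    rw [h i]; simp [Sym2.map_id']⟩

variable (a : PreTAG) {A B : Finset (Fin a.ne)}

lemma Q1 (T : Finset (Fin (A ∪ B).card))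
    (himT : T.image (emb (A ∪ B)) = A) :
    (⟦subPre (subPre a (A ∪ B)) T⟧ : TAGQ) = ⟦subPre a A⟧ := by
  have hcard : T.card = A.card := by
    have h := card_image_emb (A ∪ B) T
    rw [himT] at h
    exact h.symm
  apply tagq_eq hcard
  intro (i : Fin T.card)
  erw [subPre_ends (subPre a (A ∪ B)) T i, subPre_ends a A,
    subPre_ends a (A ∪ B), emb_emb (A ∪ B) T himT hcard]
  rfl

lemma Q2 (T : Finset (Fin (A ∪ B).card)) (T' : Finset (Fin Aᶜ.card))
    (hrel1 : conRel (subPre a (A ∪ B)) T = conRel a A)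
    (himTc : Tᶜ.image (emb (A ∪ B)) = B)
    (himT' : T'.image (emb Aᶜ) = B) :
    (⟦conPre (subPre a (A ∪ B)) T⟧ : TAGQ) = ⟦subPre (conPre a A) T'⟧ := by
  have hc1 : Tᶜ.card = B.card := by
    have h := card_image_emb (A ∪ B) Tᶜ
    rw [himTc] at h
    exact h.symm
  have hc2 : T'.card = B.card := by
    have h := card_image_emb Aᶜ T'
    rw [himT'] at h
    exact h.symm
  have hm : Tᶜ.card = T'.card := hc1.trans hc2.symm
  apply tagq_eq hm
  intro (i : Fin Tᶜ.card)
  erw [conPre_ends (subPre a (A ∪ B)) T i,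
    subPre_ends (conPre a A) T' (Fin.cast hm i),
    subPre_ends a (A ∪ B),
    conPre_ends a A,
    emb_emb (A ∪ B) Tᶜ himTc hc1,
    emb_emb Aᶜ T' himT' hc2]
  have hcm : cmin (subPre a (A ∪ B)) T = cmin a A := by
    unfold cmin; rw [hrel1]
  rw [hcm]
  have hcast : Fin.cast hc2 (Fin.cast hm i) = Fin.cast hc1 i := by ext; simp
  erw [hcast]

lemma Q3 (T' : Finset (Fin Aᶜ.card))
    (hrel2 : conRel (conPre a A) T' = relB a A B)
    (himT'c : T'ᶜ.image (emb Aᶜ) = (A ∪ B)ᶜ) :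
    (⟦conPre a (A ∪ B)⟧ : TAGQ) = ⟦conPre (conPre a A) T'⟧ := by
  have hc : T'ᶜ.card = ((A ∪ B)ᶜ).card := by
    have h := card_image_emb Aᶜ T'ᶜ
    rw [himT'c] at h
    exact h.symm
  apply tagq_eq hc.symm
  intro (i : Fin ((A ∪ B)ᶜ).card)
  erw [conPre_ends a (A ∪ B) i,
    conPre_ends (conPre a A) T' (Fin.cast hc.symm i),
    conPre_ends a A,
    emb_emb Aᶜ T'ᶜ himT'c hc]
  have hcm : cmin (conPre a A) T'
      = fun v => sInf {u | Relation.EqvGen (relB a A B) u v} := by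
    unfold cmin; rw [hrel2]
  rw [hcm, Sym2.map_map]
  have hcast : Fin.cast hc (Fin.cast hc.symm i) = i := by ext; simp
  erw [hcast]
  apply Sym2.map_congr
  intro x _
  exact (relB_L3 a A B x).symm

-- the concrete instantiations
lemma imT : (univ.filter (fun j => emb (A ∪ B) j ∈ A)).image (emb (A ∪ B)) = A := by
  rw [image_filter_emb]
  exact Finset.inter_eq_right.2 Finset.subset_union_left

lemma imTc (hd : Disjoint A B) :
    ((univ.filter (fun j => emb (A ∪ B) j ∈ A))ᶜ).image (emb (A ∪ B)) = B := by
  rw [filter_emb_compl, image_filter_emb]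
  ext x
  simp only [Finset.mem_inter, Finset.mem_union, Finset.mem_compl]
  constructor
  · rintro ⟨hAB, hA⟩; tauto
  · intro hx
    exact ⟨Or.inr hx, fun hA => Finset.disjoint_left.1 hd hA hx⟩

lemma imT' (hd : Disjoint A B) :
    (univ.filter (fun j => emb Aᶜ j ∈ B)).image (emb Aᶜ) = B := by
  rw [image_filter_emb]
  exact Finset.inter_eq_right.2
    (fun x hx => Finset.mem_compl.2 (fun hA => Finset.disjoint_left.1 hd hA hx))

lemma imT'c :
    ((univ.filter (fun j => emb Aᶜ j ∈ B))ᶜ).image (emb Aᶜ) = (A ∪ B)ᶜ := by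
  rw [filter_emb_compl, image_filter_emb, ← Finset.compl_union]

end Aux4
section Aux5
open Finset Relation

lemma eqvGen_iff_of_equiv {r s : ℕ → ℕ → Prop} (e : ℕ ≃ ℕ)
    (h : ∀ u v, r u v ↔ s (e u) (e v)) (u v : ℕ) :
    Relation.EqvGen r u v ↔ Relation.EqvGen s (e u) (e v) := by
  constructor
  · intro hr
    induction hr with
    | rel x y hxy => exact Relation.EqvGen.rel _ _ ((h x y).1 hxy)
    | refl x => exact Relation.EqvGen.refl _
    | symm x y _ ih => exact ih.symm _ _
    | trans x y z _ _ ih1 ih2 => exact ih1.trans _ _ _ ih2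
  · intro hs
    have key : ∀ x y : ℕ, Relation.EqvGen s x y →
        Relation.EqvGen r (e.symm x) (e.symm y) := by
      intro x y hxy
      induction hxy with
      | rel x y hxy =>
        refine Relation.EqvGen.rel _ _ ((h (e.symm x) (e.symm y)).2 ?_)
        simpa using hxy
      | refl x => exact Relation.EqvGen.refl _
      | symm x y _ ih => exact ih.symm _ _
      | trans x y z _ _ ih1 ih2 => exact ih1.trans _ _ _ ih2
    have := key _ _ hs
    simpa using this

lemma sym2_mem_finite (s : Sym2 ℕ) : {u | u ∈ s}.Finite := by
  induction s using Sym2.ind with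
  | _ x y =>
    apply Set.Finite.subset (Set.toFinite ({x, y} : Set ℕ))
    intro u hu
    rcases Sym2.mem_iff.1 hu with h | h <;> simp [h]

lemma eqvGen_conRel_cases (a : PreTAG) (S : Finset (Fin a.ne)) {u v : ℕ}
    (h : Relation.EqvGen (conRel a S) u v) :
    u = v ∨ ((∃ i, u ∈ a.ends i) ∧ (∃ i, v ∈ a.ends i)) := by
  induction h with
  | rel x y hxy => obtain ⟨i, _, h1, h2⟩ := hxy; exact Or.inr ⟨⟨i, h1⟩, ⟨i, h2⟩⟩
  | refl x => exact Or.inl rfl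
  | symm x y _ ih => rcases ih with h | ⟨h1, h2⟩; exacts [Or.inl h.symm, Or.inr ⟨h2, h1⟩]
  | trans x y z _ _ ih1 ih2 =>
    rcases ih1 with h | ⟨h1, h2⟩
    · exact h ▸ ih2
    · rcases ih2 with h' | ⟨h1', h2'⟩
      · exact Or.inr ⟨h1, h' ▸ h2⟩
      · exact Or.inr ⟨h1, h2'⟩

lemma class_finite (a : PreTAG) (S : Finset (Fin a.ne)) (v : ℕ) :
    {u | Relation.EqvGen (conRel a S) u v}.Finite := by
  have hend : {u : ℕ | ∃ i, u ∈ a.ends i}.Finite := by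
    have : {u : ℕ | ∃ i, u ∈ a.ends i} = ⋃ i, {u | u ∈ a.ends i} := by
      ext u; simp
    rw [this]
    exact Set.finite_iUnion (fun i => sym2_mem_finite _)
  apply Set.Finite.subset (hend.insert v)
  intro u hu
  rcases eqvGen_conRel_cases a S hu with h | ⟨h1, _⟩
  · simp [h]
  · exact Set.mem_insert_iff.2 (Or.inr h1)

/-- The connectivity class of `v` as a finset. -/
noncomputable def classF (a : PreTAG) (S : Finset (Fin a.ne)) (v : ℕ) : Finset ℕ :=
  (class_finite a S v).toFinset

lemma mem_classF {a : PreTAG} {S : Finset (Fin a.ne)} {u v : ℕ} :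
    u ∈ classF a S v ↔ Relation.EqvGen (conRel a S) u v :=
  Set.Finite.mem_toFinset _

lemma self_mem_classF (a : PreTAG) (S : Finset (Fin a.ne)) (v : ℕ) :
    v ∈ classF a S v := mem_classF.2 (Relation.EqvGen.refl v)

lemma classF_eq_of {a : PreTAG} {S : Finset (Fin a.ne)} {u v : ℕ}
    (h : Relation.EqvGen (conRel a S) u v) : classF a S u = classF a S v := by
  ext w
  simp only [mem_classF]
  exact ⟨fun hw => hw.trans _ _ _ h, fun hw => hw.trans _ _ _ h.symm⟩

lemma cmin_eq_min' (a : PreTAG) (S : Finset (Fin a.ne)) (v : ℕ) :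
    cmin a S v = (classF a S v).min' ⟨v, self_mem_classF a S v⟩ := by
  apply le_antisymm
  · exact cmin_le a S (mem_classF.1 (Finset.min'_mem _ _))
  · exact Finset.min'_le _ _ (mem_classF.2 (cmin_spec a S v))

-- sorted list indexing helpers
lemma indexOf_lt_card {s : Finset ℕ} {v : ℕ} (hv : v ∈ s) :
    (s.sort (· ≤ ·)).idxOf v < s.card := by
  rw [← Finset.length_sort (· ≤ ·)]
  exact List.idxOf_lt_length_iff.2 ((Finset.mem_sort _).2 hv)

lemma getD_sort_mem {s : Finset ℕ} {i : ℕ} (hi : i < s.card) :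
    (s.sort (· ≤ ·)).getD i 0 ∈ s := by
  have hlen : i < (s.sort (· ≤ ·)).length := by rwa [Finset.length_sort]
  rw [List.getD_eq_getElem _ _ hlen]
  exact (Finset.mem_sort _).1 (List.getElem_mem _)

lemma getD_sort_indexOf {s : Finset ℕ} {v : ℕ} (hv : v ∈ s) :
    (s.sort (· ≤ ·)).getD ((s.sort (· ≤ ·)).idxOf v) 0 = v := by
  have hlen : (s.sort (· ≤ ·)).idxOf v < (s.sort (· ≤ ·)).length :=
    List.idxOf_lt_length_iff.2 ((Finset.mem_sort _).2 hv)
  rw [List.getD_eq_getElem _ _ hlen]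
  exact List.getElem_idxOf hlen

lemma indexOf_getD_sort {s : Finset ℕ} {i : ℕ} (hi : i < s.card) :
    (s.sort (· ≤ ·)).idxOf ((s.sort (· ≤ ·)).getD i 0) = i := by
  have hlen : i < (s.sort (· ≤ ·)).length := by rwa [Finset.length_sort]
  rw [List.getD_eq_getElem _ _ hlen]
  exact List.Nodup.idxOf_getElem (Finset.sort_nodup _ _) _ _

lemma getD_sort_zero {s : Finset ℕ} (hs : s.Nonempty) :
    (s.sort (· ≤ ·)).getD 0 0 = s.min' hs := by
  have hlen : 0 < (s.sort (· ≤ ·)).length := by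
    rw [Finset.length_sort]; exact Finset.card_pos.2 hs
  rw [List.getD_eq_getElem _ _ hlen]
  exact Finset.sorted_zero_eq_min'

lemma indexOf_min' {s : Finset ℕ} (hs : s.Nonempty) :
    (s.sort (· ≤ ·)).idxOf (s.min' hs) = 0 := by
  have h0 : (0 : ℕ) < s.card := Finset.card_pos.2 hs
  have := indexOf_getD_sort h0
  rwa [getD_sort_zero hs] at this

end Aux5
section Aux6
open Finset Relation

lemma min'_congr {s t : Finset ℕ} (h : s = t) (hs : s.Nonempty) (ht : t.Nonempty) :
    s.min' hs = t.min' ht := by subst h; rfl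

/-- Vertex relabelling between contracted graphs. -/
noncomputable def Emap (a b : PreTAG) (Sa : Finset (Fin a.ne)) (Sb : Finset (Fin b.ne))
    (e : ℕ ≃ ℕ) : ℕ → ℕ :=
  fun v => ((classF b Sb (e v)).sort (· ≤ ·)).getD
    (((classF a Sa v).sort (· ≤ ·)).idxOf v) 0

section EmapLemmas

variable {a b : PreTAG} {Sa : Finset (Fin a.ne)} {Sb : Finset (Fin b.ne)} {e : ℕ ≃ ℕ}
variable (hiff : ∀ u v : ℕ, Relation.EqvGen (conRel a Sa) u v ↔
    Relation.EqvGen (conRel b Sb) (e u) (e v))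
include hiff

lemma classF_img (v : ℕ) : classF b Sb (e v) = (classF a Sa v).image e := by
  ext w
  simp only [mem_classF, Finset.mem_image]
  constructor
  · intro hw
    exact ⟨e.symm w, (hiff _ v).2 (by simpa using hw), by simp⟩
  · rintro ⟨u, hu, rfl⟩
    exact (hiff u v).1 hu

lemma classF_card (v : ℕ) : (classF b Sb (e v)).card = (classF a Sa v).card := by
  rw [classF_img hiff]
  exact Finset.card_image_of_injective _ e.injective

lemma Emap_mem (v : ℕ) : Emap a b Sa Sb e v ∈ classF b Sb (e v) := by
  apply getD_sort_mem
  rw [classF_card hiff]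
  exact indexOf_lt_card (self_mem_classF a Sa v)

lemma Emap_rel (v : ℕ) :
    Relation.EqvGen (conRel b Sb) (Emap a b Sa Sb e v) (e v) :=
  mem_classF.1 (Emap_mem hiff v)

lemma Emap_inj : Function.Injective (Emap a b Sa Sb e) := by
  intro v v' h
  have h1 := Emap_rel hiff v
  have h2 := Emap_rel hiff v'
  rw [h] at h1
  have hee : Relation.EqvGen (conRel b Sb) (e v) (e v') := (h1.symm _ _).trans _ _ _ h2
  have hvv : Relation.EqvGen (conRel a Sa) v v' := (hiff v v').2 hee
  have hca : classF a Sa v = classF a Sa v' := classF_eq_of hvv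
  have hcb : classF b Sb (e v) = classF b Sb (e v') := classF_eq_of hee
  have hltv : ((classF a Sa v).sort (· ≤ ·)).idxOf v < (classF b Sb (e v)).card := by
    rw [classF_card hiff]; exact indexOf_lt_card (self_mem_classF a Sa v)
  have hltv' : ((classF a Sa v').sort (· ≤ ·)).idxOf v' < (classF b Sb (e v')).card := by
    rw [classF_card hiff]; exact indexOf_lt_card (self_mem_classF a Sa v')
  have i1 : ((classF b Sb (e v)).sort (· ≤ ·)).idxOf (Emap a b Sa Sb e v)
      = ((classF a Sa v).sort (· ≤ ·)).idxOf v := indexOf_getD_sort hltv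
  have i2 : ((classF b Sb (e v')).sort (· ≤ ·)).idxOf (Emap a b Sa Sb e v')
      = ((classF a Sa v').sort (· ≤ ·)).idxOf v' := indexOf_getD_sort hltv'
  rw [h, hcb] at i1
  have hidx : ((classF a Sa v').sort (· ≤ ·)).idxOf v'
      = ((classF a Sa v).sort (· ≤ ·)).idxOf v := i2.symm.trans i1
  have e1 := getD_sort_indexOf (self_mem_classF a Sa v)
  have e2 := getD_sort_indexOf (self_mem_classF a Sa v')
  rw [← hca] at hidx e2
  rw [hidx] at e2
  exact e1.symm.trans e2

lemma Emap_surj : Function.Surjective (Emap a b Sa Sb e) := by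
  intro w
  have hw : w ∈ classF b Sb (e (e.symm w)) := by
    simp only [Equiv.apply_symm_apply]
    exact self_mem_classF b Sb w
  have hi : ((classF b Sb (e (e.symm w))).sort (· ≤ ·)).idxOf w
      < (classF b Sb (e (e.symm w))).card := indexOf_lt_card hw
  have hi' : ((classF b Sb (e (e.symm w))).sort (· ≤ ·)).idxOf w
      < (classF a Sa (e.symm w)).card := by
    rw [← classF_card hiff (e.symm w)]; exact hi
  have hv : ((classF a Sa (e.symm w)).sort (· ≤ ·)).getD
      (((classF b Sb (e (e.symm w))).sort (· ≤ ·)).idxOf w) 0 ∈ classF a Sa (e.symm w) :=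
    getD_sort_mem hi'
  refine ⟨((classF a Sa (e.symm w)).sort (· ≤ ·)).getD
      (((classF b Sb (e (e.symm w))).sort (· ≤ ·)).idxOf w) 0, ?_⟩
  have hvv0 : Relation.EqvGen (conRel a Sa)
      (((classF a Sa (e.symm w)).sort (· ≤ ·)).getD
        (((classF b Sb (e (e.symm w))).sort (· ≤ ·)).idxOf w) 0) (e.symm w) :=
    mem_classF.1 hv
  have hca := classF_eq_of hvv0
  have hcb := classF_eq_of ((hiff _ (e.symm w)).1 hvv0)
  unfold Emap
  rw [hca, hcb, indexOf_getD_sort hi']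
  exact getD_sort_indexOf hw

lemma Emap_min (v : ℕ) : Emap a b Sa Sb e (cmin a Sa v) = cmin b Sb (e v) := by
  have hm : Relation.EqvGen (conRel a Sa) (cmin a Sa v) v := cmin_spec a Sa v
  have hca : classF a Sa (cmin a Sa v) = classF a Sa v := classF_eq_of hm
  have hne : (classF a Sa v).Nonempty := ⟨v, self_mem_classF a Sa v⟩
  have hminv : cmin a Sa v = (classF a Sa v).min' hne := cmin_eq_min' a Sa v
  have hidx : ((classF a Sa v).sort (· ≤ ·)).idxOf (cmin a Sa v) = 0 := by
    rw [hminv]; exact indexOf_min' hne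
  have hneb : (classF b Sb (e (cmin a Sa v))).Nonempty :=
    ⟨_, self_mem_classF b Sb (e (cmin a Sa v))⟩
  have hcb : classF b Sb (e (cmin a Sa v)) = classF b Sb (e v) :=
    classF_eq_of ((hiff _ v).1 hm)
  unfold Emap
  rw [hca, hidx, getD_sort_zero hneb]
  rw [cmin_eq_min' b Sb (e v)]
  exact min'_congr hcb _ _

end EmapLemmas

lemma emb_congr {n : ℕ} {X Y : Finset (Fin n)} (h : X = Y) (hc : X.card = Y.card)
    (j : Fin X.card) : emb X j = emb Y (Fin.cast hc j) := by
  subst h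
  rfl

lemma map_emb {n m : ℕ} (hm : n = m) (S : Finset (Fin n))
    (hc : S.card = (S.map (finCongr hm).toEmbedding).card) (j : Fin S.card) :
    Fin.cast hm (emb S j) = emb (S.map (finCongr hm).toEmbedding) (Fin.cast hc j) := by
  have h1 : (fun j : Fin S.card => Fin.cast hm (emb S j))
      = (S.map (finCongr hm).toEmbedding).orderEmbOfFin hc.symm := by
    apply Finset.orderEmbOfFin_unique
    · intro x
      rw [Finset.mem_map]
      exact ⟨emb S x, emb_mem S x, by ext; simp⟩
    · intro x y hxy
      have h2 := emb_strictMono S hxy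
      rw [Fin.lt_def] at h2 ⊢
      simpa using h2
  calc Fin.cast hm (emb S j) = (S.map (finCongr hm).toEmbedding).orderEmbOfFin hc.symm j :=
        congrFun h1 j
    _ = emb (S.map (finCongr hm).toEmbedding) (Fin.cast hc j) := orderEmbOfFin_cast _ _ _ _

lemma compl_map {n m : ℕ} (hm : n = m) (S : Finset (Fin n)) :
    (S.map (finCongr hm).toEmbedding)ᶜ = Sᶜ.map (finCongr hm).toEmbedding := by
  ext x
  simp [Finset.mem_map_equiv]

lemma sub_transport {a b : PreTAG} (hm : a.ne = b.ne) (e : ℕ ≃ ℕ)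
    (he : ∀ i, Sym2.map e (a.ends i) = b.ends (Fin.cast hm i)) (S : Finset (Fin a.ne)) :
    (⟦subPre a S⟧ : TAGQ) = ⟦subPre b (S.map (finCongr hm).toEmbedding)⟧ := by
  have hc : S.card = (S.map (finCongr hm).toEmbedding).card := (Finset.card_map _).symm
  apply Quotient.sound
  refine ⟨hc, e, fun (i : Fin S.card) => ?_⟩
  show Sym2.map e ((subPre a S).ends i)
      = (subPre b (S.map (finCongr hm).toEmbedding)).ends (Fin.cast hc i)
  erw [subPre_ends a S i, subPre_ends b _ (Fin.cast hc i), ← map_emb hm S hc i, he]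

lemma con_transport {a b : PreTAG} (hm : a.ne = b.ne) (e : ℕ ≃ ℕ)
    (he : ∀ i, Sym2.map e (a.ends i) = b.ends (Fin.cast hm i)) (S : Finset (Fin a.ne)) :
    (⟦conPre a S⟧ : TAGQ) = ⟦conPre b (S.map (finCongr hm).toEmbedding)⟧ := by
  have hrel : ∀ u v : ℕ, conRel a S u v ↔
      conRel b (S.map (finCongr hm).toEmbedding) (e u) (e v) := by
    intro u v
    constructor
    · rintro ⟨i, hi, h1, h2⟩
      refine ⟨Fin.cast hm i, ?_, ?_, ?_⟩
      · rw [Finset.mem_map]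
        exact ⟨i, hi, by ext; simp⟩
      · rw [← he i]; exact Sym2.mem_map.2 ⟨u, h1, rfl⟩
      · rw [← he i]; exact Sym2.mem_map.2 ⟨v, h2, rfl⟩
    · rintro ⟨i', hi', h1, h2⟩
      rw [Finset.mem_map] at hi'
      obtain ⟨i, hi, rfl⟩ := hi'
      have hii : ((finCongr hm).toEmbedding i : Fin b.ne) = Fin.cast hm i := by ext; simp
      rw [hii, ← he i] at h1 h2
      obtain ⟨x, hx, hex⟩ := Sym2.mem_map.1 h1
      obtain ⟨y, hy, hey⟩ := Sym2.mem_map.1 h2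
      have hxu : x = u := e.injective hex
      have hyv : y = v := e.injective hey
      subst hxu; subst hyv
      exact ⟨i, hi, hx, hy⟩
  have hiff : ∀ u v : ℕ, Relation.EqvGen (conRel a S) u v ↔
      Relation.EqvGen (conRel b (S.map (finCongr hm).toEmbedding)) (e u) (e v) :=
    fun u v => eqvGen_iff_of_equiv e hrel u v
  have hcc2 : Sᶜ.card = (Sᶜ.map (finCongr hm).toEmbedding).card := (Finset.card_map _).symm
  have hcompl := compl_map hm S
  have hccompl : Sᶜ.card = ((S.map (finCongr hm).toEmbedding)ᶜ).card := by
    rw [hcompl]; exact hcc2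
  apply Quotient.sound
  refine ⟨hccompl, Equiv.ofBijective (Emap a b S (S.map (finCongr hm).toEmbedding) e)
    ⟨Emap_inj hiff, Emap_surj hiff⟩, fun (j : Fin Sᶜ.card) => ?_⟩
  show Sym2.map (Emap a b S (S.map (finCongr hm).toEmbedding) e) ((conPre a S).ends j)
      = (conPre b (S.map (finCongr hm).toEmbedding)).ends (Fin.cast hccompl j)
  erw [conPre_ends a S j, conPre_ends b _ (Fin.cast hccompl j), Sym2.map_map]
  have hfun : (Emap a b S (S.map (finCongr hm).toEmbedding) e) ∘ (cmin a S)
      = (cmin b (S.map (finCongr hm).toEmbedding)) ∘ e := funext (Emap_min hiff)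
  rw [hfun, ← Sym2.map_map, he (emb Sᶜ j)]
  rw [map_emb hm Sᶜ hcc2 j]
  rw [emb_congr hcompl (congrArg Finset.card hcompl) (Fin.cast hccompl j)]
  have hIdx : (Fin.cast (congrArg Finset.card hcompl) (Fin.cast hccompl j))
      = Fin.cast hcc2 j := by ext; simp
  rw [hIdx]
end Aux6
section Aux7
open Finset TensorProduct

variable (K : Type) [Field K]

/-- The coproduct of a concrete representative. -/
noncomputable def deltaTPre (a : PreTAG) : HT K ⊗[K] HT K :=
  ∑ S : Finset (Fin a.ne),
    Finsupp.single (⟦subPre a S⟧ : TAGQ) (1 : K) ⊗ₜ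
      Finsupp.single (⟦conPre a S⟧ : TAGQ) (1 : K)

lemma deltaTPre_congr {a b : PreTAG} (h : TagRel a b) : deltaTPre K a = deltaTPre K b := by
  obtain ⟨hm, e, he⟩ := h
  apply Fintype.sum_equiv (Equiv.finsetCongr (finCongr hm))
  intro S
  rw [sub_transport hm e he S, con_transport hm e he S, Equiv.finsetCongr_apply]

lemma deltaT_mk (b : PreTAG) : deltaT K ⟦b⟧ = deltaTPre K b := by
  have h : deltaT K ⟦b⟧ = deltaTPre K (Quotient.out ⟦b⟧) := rfl
  rw [h]
  exact deltaTPre_congr K (Quotient.exact (Quotient.out_eq (⟦b⟧ : TAGQ)))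

lemma deltaH_single (g : TAGQ) (c : K) :
    deltaH K (Finsupp.single g c) = c • deltaT K g := by
  simp [deltaH]

lemma deltaH_single_mk (b : PreTAG) :
    deltaH K (Finsupp.single (⟦b⟧ : TAGQ) (1 : K)) = deltaTPre K b := by
  erw [deltaH_single, one_smul, deltaT_mk]

end Aux7
section Aux8
open Finset

lemma filter_image_eq {n : ℕ} (S : Finset (Fin n)) (T : Finset (Fin S.card)) :
    univ.filter (fun j => emb S j ∈ T.image (emb S)) = T := by
  ext j
  simp only [Finset.mem_filter, Finset.mem_univ, true_and, Finset.mem_image]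
  constructor
  · rintro ⟨k, hk, hkj⟩
    rwa [← emb_inj S hkj]
  · intro hj
    exact ⟨j, hj, rfl⟩

lemma sum_subsets_reindex {M : Type*} [AddCommMonoid M] {n : ℕ} (S : Finset (Fin n))
    (F : Finset (Fin S.card) → M) :
    ∑ T : Finset (Fin S.card), F T
      = ∑ A ∈ S.powerset, F (univ.filter (fun j => emb S j ∈ A)) := by
  apply Finset.sum_nbij' (i := fun T => T.image (emb S))
    (j := fun A => univ.filter (fun j => emb S j ∈ A))
  · intro T _
    refine Finset.mem_powerset.2 (fun x hx => ?_)
    obtain ⟨j, _, rfl⟩ := Finset.mem_image.1 hx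
    exact emb_mem S j
  · intro A _
    exact Finset.mem_univ _
  · intro T _
    exact filter_image_eq S T
  · intro A hA
    rw [image_filter_emb]
    exact Finset.inter_eq_right.2 (Finset.mem_powerset.1 hA)
  · intro T _
    rw [filter_image_eq S T]

lemma sum_pairs_reindex {M : Type*} [AddCommMonoid M] {n : ℕ}
    (f : Finset (Fin n) → Finset (Fin n) → M) :
    ∑ S : Finset (Fin n), ∑ A ∈ S.powerset, f S A
      = ∑ A : Finset (Fin n), ∑ B ∈ Aᶜ.powerset, f (A ∪ B) A := by
  rw [Finset.sum_comm' (t' := univ) (s' := fun A => univ.filter (fun S => A ⊆ S))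
    (by intro S A; simp [Finset.mem_powerset])]
  apply Finset.sum_congr rfl
  intro A _
  apply Finset.sum_nbij' (i := fun S => S \ A) (j := fun B => A ∪ B)
  · intro S hS
    refine Finset.mem_powerset.2 (fun x hx => ?_)
    rw [Finset.mem_sdiff] at hx
    exact Finset.mem_compl.2 hx.2
  · intro B hB
    simp only [Finset.mem_filter, Finset.mem_univ, true_and]
    exact Finset.subset_union_left
  · intro S hS
    simp only [Finset.mem_filter, Finset.mem_univ, true_and] at hS
    exact Finset.union_sdiff_of_subset hS
  · intro B hB
    apply Finset.union_sdiff_cancel_left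
    rw [Finset.disjoint_left]
    intro x hxA hxB
    exact Finset.mem_compl.1 (Finset.mem_powerset.1 hB hxB) hxA
  · intro S hS
    simp only [Finset.mem_filter, Finset.mem_univ, true_and] at hS
    rw [Finset.union_sdiff_of_subset hS]

variable (K : Type) [Field K]
open scoped TensorProduct

lemma core_identity (a : PreTAG) :
    (∑ S : Finset (Fin a.ne), ∑ T : Finset (Fin (subPre a S).ne),
      (Finsupp.single (⟦subPre (subPre a S) T⟧ : TAGQ) (1 : K)) ⊗ₜ[K]
        ((Finsupp.single (⟦conPre (subPre a S) T⟧ : TAGQ) (1 : K)) ⊗ₜ[K]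
          (Finsupp.single (⟦conPre a S⟧ : TAGQ) (1 : K))))
    = ∑ S : Finset (Fin a.ne), ∑ T : Finset (Fin (conPre a S).ne),
      (Finsupp.single (⟦subPre a S⟧ : TAGQ) (1 : K)) ⊗ₜ[K]
        ((Finsupp.single (⟦subPre (conPre a S) T⟧ : TAGQ) (1 : K)) ⊗ₜ[K]
          (Finsupp.single (⟦conPre (conPre a S) T⟧ : TAGQ) (1 : K))) := by
  have hL : ∀ S : Finset (Fin a.ne),
      (∑ T : Finset (Fin (subPre a S).ne),
        (Finsupp.single (⟦subPre (subPre a S) T⟧ : TAGQ) (1 : K)) ⊗ₜ[K]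
          ((Finsupp.single (⟦conPre (subPre a S) T⟧ : TAGQ) (1 : K)) ⊗ₜ[K]
            (Finsupp.single (⟦conPre a S⟧ : TAGQ) (1 : K))))
      = ∑ A ∈ S.powerset,
        (Finsupp.single
            (⟦subPre (subPre a S) ((univ.filter (fun j => emb S j ∈ A) : Finset (Fin S.card)))⟧ : TAGQ) (1 : K)) ⊗ₜ[K]
          ((Finsupp.single
            (⟦conPre (subPre a S) ((univ.filter (fun j => emb S j ∈ A) : Finset (Fin S.card)))⟧ : TAGQ) (1 : K)) ⊗ₜ[K]
            (Finsupp.single (⟦conPre a S⟧ : TAGQ) (1 : K))) := by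
    intro S
    exact sum_subsets_reindex S (fun T =>
      (Finsupp.single (⟦subPre (subPre a S) T⟧ : TAGQ) (1 : K)) ⊗ₜ[K]
        ((Finsupp.single (⟦conPre (subPre a S) T⟧ : TAGQ) (1 : K)) ⊗ₜ[K]
          (Finsupp.single (⟦conPre a S⟧ : TAGQ) (1 : K))))
  have hR : ∀ S : Finset (Fin a.ne),
      (∑ T : Finset (Fin (conPre a S).ne),
        (Finsupp.single (⟦subPre a S⟧ : TAGQ) (1 : K)) ⊗ₜ[K]
          ((Finsupp.single (⟦subPre (conPre a S) T⟧ : TAGQ) (1 : K)) ⊗ₜ[K]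
            (Finsupp.single (⟦conPre (conPre a S) T⟧ : TAGQ) (1 : K))))
      = ∑ B ∈ Sᶜ.powerset,
        (Finsupp.single (⟦subPre a S⟧ : TAGQ) (1 : K)) ⊗ₜ[K]
          ((Finsupp.single
            (⟦subPre (conPre a S) ((univ.filter (fun j => emb Sᶜ j ∈ B) : Finset (Fin Sᶜ.card)))⟧ : TAGQ) (1 : K)) ⊗ₜ[K]
            (Finsupp.single
              (⟦conPre (conPre a S) ((univ.filter (fun j => emb Sᶜ j ∈ B) : Finset (Fin Sᶜ.card)))⟧ : TAGQ) (1 : K))) := by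
    intro S
    exact sum_subsets_reindex Sᶜ (fun T =>
      (Finsupp.single (⟦subPre a S⟧ : TAGQ) (1 : K)) ⊗ₜ[K]
        ((Finsupp.single (⟦subPre (conPre a S) T⟧ : TAGQ) (1 : K)) ⊗ₜ[K]
          (Finsupp.single (⟦conPre (conPre a S) T⟧ : TAGQ) (1 : K))))
  calc
    _ = ∑ S : Finset (Fin a.ne), ∑ A ∈ S.powerset,
        (Finsupp.single
            (⟦subPre (subPre a S) ((univ.filter (fun j => emb S j ∈ A) : Finset (Fin S.card)))⟧ : TAGQ) (1 : K)) ⊗ₜ[K]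
          ((Finsupp.single
            (⟦conPre (subPre a S) ((univ.filter (fun j => emb S j ∈ A) : Finset (Fin S.card)))⟧ : TAGQ) (1 : K)) ⊗ₜ[K]
            (Finsupp.single (⟦conPre a S⟧ : TAGQ) (1 : K))) :=
      Finset.sum_congr rfl (fun S _ => hL S)
    _ = ∑ A : Finset (Fin a.ne), ∑ B ∈ Aᶜ.powerset,
        (Finsupp.single
            (⟦subPre (subPre a (A ∪ B)) ((univ.filter (fun j => emb (A ∪ B) j ∈ A) : Finset (Fin (A ∪ B).card)))⟧ : TAGQ)
            (1 : K)) ⊗ₜ[K]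
          ((Finsupp.single
            (⟦conPre (subPre a (A ∪ B)) ((univ.filter (fun j => emb (A ∪ B) j ∈ A) : Finset (Fin (A ∪ B).card)))⟧ : TAGQ)
            (1 : K)) ⊗ₜ[K]
            (Finsupp.single (⟦conPre a (A ∪ B)⟧ : TAGQ) (1 : K))) :=
      sum_pairs_reindex _
    _ = ∑ A : Finset (Fin a.ne), ∑ B ∈ Aᶜ.powerset,
        (Finsupp.single (⟦subPre a A⟧ : TAGQ) (1 : K)) ⊗ₜ[K]
          ((Finsupp.single
            (⟦subPre (conPre a A) ((univ.filter (fun j => emb Aᶜ j ∈ B) : Finset (Fin Aᶜ.card)))⟧ : TAGQ) (1 : K)) ⊗ₜ[K]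
            (Finsupp.single
              (⟦conPre (conPre a A) ((univ.filter (fun j => emb Aᶜ j ∈ B) : Finset (Fin Aᶜ.card)))⟧ : TAGQ) (1 : K))) := by
      refine Finset.sum_congr rfl (fun A _ => Finset.sum_congr rfl (fun B hB => ?_))
      have hd : Disjoint A B := by
        rw [Finset.disjoint_left]
        intro x hxA hxB
        exact Finset.mem_compl.1 (Finset.mem_powerset.1 hB hxB) hxA
      have himT := imT a (A := A) (B := B)
      have himTc := imTc a hd
      have himT' := imT' a hd
      have himT'c := imT'c a (A := A) (B := B)
      have hrel1 : conRel (subPre a (A ∪ B)) ((univ.filter (fun j => emb (A ∪ B) j ∈ A) : Finset (Fin (A ∪ B).card)))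
          = conRel a A := by
        rw [conRel_subPre]; exact congrArg (conRel a) himT
      have hrel2 : conRel (conPre a A) ((univ.filter (fun j => emb Aᶜ j ∈ B) : Finset (Fin Aᶜ.card)))
          = relB a A B := by
        rw [conRel_conPre]; exact congrArg (relB a A) himT'
      rw [Q1 a _ himT, Q2 a _ _ hrel1 himTc himT', Q3 a _ hrel2 himT'c]
    _ = _ := (Finset.sum_congr rfl (fun S _ => hR S)).symm

end Aux8

lemma assoc_tmul' (K : Type) [Field K] (x y z : HT K) :
    (TensorProduct.assoc K (HT K) (HT K) (HT K)).toLinearMap ((x ⊗ₜ[K] y) ⊗ₜ[K] z)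
      = x ⊗ₜ[K] (y ⊗ₜ[K] z) :=
  TensorProduct.assoc_tmul x y z

/-- The coproduct `Δ` on the space `H` of TAGs, defined by
`Δ(Γ,μ) = Σ_{(γ,ν) ⊆ (Γ,μ)} (γ,ν) ⊗ (Γ/γ, μ/ν)`, is coassociative:
`(Δ ⊗ Id) ∘ Δ = (Id ⊗ Δ) ∘ Δ`. -/
theorem tag_coproduct_coassoc (K : Type) [Field K] [CharZero K] :
    (TensorProduct.assoc K (HT K) (HT K) (HT K)).toLinearMap ∘ₗ
        TensorProduct.map (deltaH K) LinearMap.id ∘ₗ deltaH K =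
      TensorProduct.map LinearMap.id (deltaH K) ∘ₗ deltaH K := by
  apply Finsupp.lhom_ext
  intro g c
  simp only [LinearMap.comp_apply]
  rw [deltaH_single, map_smul, map_smul, map_smul]
  congr 1
  have ha : deltaT K g = deltaTPre K (Quotient.out g) := rfl
  rw [ha]
  simp only [deltaTPre, map_sum, TensorProduct.map_tmul, LinearMap.id_coe, id_eq,
    deltaH_single_mk, TensorProduct.sum_tmul, TensorProduct.tmul_sum, assoc_tmul']
  exact core_identity K (Quotient.out g)
end
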